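/- Let A be an ℕ-graded Noetherian ring with A₀ = k a field, let f₁,…,f_s ∈ A₁ be a homogeneous system of parameters (so A is a finitely generated free module over S = k[f₁,…,f_s] with homogeneous basis y₁,…,y_m), and suppose the Hilbert series H(A;t) has negative degree as a rational function. Then max_j deg y_j < s; in particular A is generated as a k-algebra in degrees < s = Krull dim A. -/

import Mathlib

open DirectSum

lemma graded_piece_basis {k A : Type} [Field k] [CommRing A] [Algebra k A]
    (𝒜 : ℕ → Submodule k A) [GradedAlgebra 𝒜] {ι : Type} (v : Module.Basis ι k A)
    (g : ι → ℕ) (hv : ∀ i, v i ∈ 𝒜 (g i)) (d : ℕ) :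
    Nonempty (Module.Basis {i // g i = d} k (𝒜 d)) := by
  classical
  let w : {i // g i = d} → 𝒜 d := fun i => ⟨v i, by have := hv i.1; rwa [i.2] at this⟩
  have hcomp : ((𝒜 d).subtype ∘ w) = v ∘ Subtype.val := rfl
  have hli : LinearIndependent k w := by
    apply LinearIndependent.of_comp (𝒜 d).subtype
    rw [hcomp]
    exact v.linearIndependent.comp Subtype.val Subtype.val_injective
  have hsp : ⊤ ≤ Submodule.span k (Set.range w) := by
    rintro ⟨x, hx⟩ -
    set c := v.repr x with hc
    have hx1 : x = c.sum fun i r => r • v i := by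
      conv_lhs => rw [← v.linearCombination_repr x]
      rw [Finsupp.linearCombination_apply]
    let π : A →ₗ[k] A := GradedAlgebra.proj 𝒜 d
    have hπ : ∀ i, π (v i) = if g i = d then v i else 0 := by
      intro i
      by_cases h : g i = d
      · rw [if_pos h, GradedAlgebra.proj_apply,
          DirectSum.decompose_of_mem_same 𝒜 (h ▸ hv i)]
      · rw [if_neg h, GradedAlgebra.proj_apply,
          DirectSum.decompose_of_mem_ne 𝒜 (hv i) h]
    have hx2 : x = ∑ i ∈ c.support.filter (fun i => g i = d), c i • v i := by
      have hπx : π x = x := by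
        show (GradedAlgebra.proj 𝒜 d) x = x
        rw [GradedAlgebra.proj_apply, DirectSum.decompose_of_mem_same 𝒜 hx]
      conv_lhs => rw [← hπx, hx1]
      rw [map_finsuppSum]
      rw [Finsupp.sum, Finset.sum_filter]
      apply Finset.sum_congr rfl
      intro i _
      rw [map_smul, hπ i]
      split <;> simp
    have key : (⟨x, hx⟩ : 𝒜 d) = ∑ i ∈ (c.support.filter (fun i => g i = d)).attach,
        c i.1 • w ⟨i.1, (Finset.mem_filter.1 i.2).2⟩ := by
      apply Subtype.ext
      push_cast [Submodule.coe_sum]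
      rw [hx2, ← Finset.sum_attach (c.support.filter (fun i => g i = d))
        (fun i => c i • v i)]
    rw [key]
    exact Submodule.sum_mem _ fun i _ => Submodule.smul_mem _ _
      (Submodule.subset_span ⟨_, rfl⟩)
  exact ⟨Module.Basis.mk hli hsp⟩
section aux

noncomputable def finsuppSumEquivSym (σ : Type) [DecidableEq σ] (n : ℕ) :
    {α : σ →₀ ℕ // (α.sum fun _ e => e) = n} ≃ Sym σ n := by
  refine Equiv.subtypeEquiv (Multiset.toFinsupp (α := σ)).toEquiv.symm ?_
  intro α
  show _ ↔ Multiset.card (Multiset.toFinsupp.symm α) = n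
  have : Multiset.toFinsupp (Multiset.toFinsupp.symm α) = α :=
    Multiset.toFinsupp.apply_symm_apply α
  conv_lhs => rw [← this]
  rw [show (fun (_:σ) (e:ℕ) => e) = (fun _ => id) from rfl, Multiset.toFinsupp_sum_eq]

lemma card_finsupp_sum_eq (σ : Type) [DecidableEq σ] [Fintype σ] (n : ℕ) :
    Nat.card {α : σ →₀ ℕ // (α.sum fun _ e => e) = n}
      = (Fintype.card σ + n - 1).choose n := by
  rw [Nat.card_congr (finsuppSumEquivSym σ n), Nat.card_eq_fintype_card,
    Sym.card_sym_eq_choose]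

lemma nat_card_sigma {m : ℕ} (T : Fin m → Type) [inst : ∀ j, Finite (T j)] :
    Nat.card (Σ j, T j) = ∑ j, Nat.card (T j) := by
  classical
  have inst2 : ∀ j, Fintype (T j) := fun j => Fintype.ofFinite _
  rw [Nat.card_eq_fintype_card, Fintype.card_sigma]
  exact Finset.sum_congr rfl fun j _ => (Nat.card_eq_fintype_card).symm

lemma fiber_finite (s : ℕ) (e d : ℕ) :
    Finite {α : Fin s →₀ ℕ // (α.sum fun _ x => x) + e = d} := by
  by_cases h : e ≤ d
  · have : {α : Fin s →₀ ℕ // (α.sum fun _ x => x) + e = d}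
        ≃ {α : Fin s →₀ ℕ // (α.sum fun _ x => x) = d - e} :=
      Equiv.subtypeEquivRight (by intro α; omega)
    have f1 : Finite {α : Fin s →₀ ℕ // (α.sum fun _ x => x) = d - e} :=
      Finite.of_equiv _ (finsuppSumEquivSym (Fin s) (d - e)).symm
    exact Finite.of_equiv _ this.symm
  · exact @Finite.of_subsingleton _ (⟨by rintro ⟨a, ha⟩ ⟨c, hc⟩; omega⟩)

lemma fiber_card (s : ℕ) (e d : ℕ) :
    Nat.card {α : Fin s →₀ ℕ // (α.sum fun _ x => x) + e = d}
      = if e ≤ d then (s + (d - e) - 1).choose (d - e) else 0 := by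
  by_cases h : e ≤ d
  · rw [if_pos h, Nat.card_congr (Equiv.subtypeEquivRight (q := fun α =>
      (α.sum fun _ x => x) = d - e) (by intro α; omega)),
      card_finsupp_sum_eq, Fintype.card_fin]
  · rw [if_neg h]
    have : IsEmpty {α : Fin s →₀ ℕ // (α.sum fun _ x => x) + e = d} :=
      ⟨by rintro ⟨a, ha⟩; omega⟩
    exact Nat.card_of_isEmpty
lemma invOneSubPow_val_eq (s : ℕ) :
    (PowerSeries.invOneSubPow ℚ s).val
      = PowerSeries.mk fun n => ((s + n - 1).choose n : ℚ) := by
  cases s with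
  | zero =>
      rw [PowerSeries.invOneSubPow_zero]
      ext n
      rw [Units.val_one, PowerSeries.coeff_one, PowerSeries.coeff_mk]
      cases n with
      | zero => simp
      | succ n => simp [Nat.choose_eq_zero_of_lt (Nat.lt_succ_of_le (Nat.sub_le n 0))]
  | succ s =>
      rw [PowerSeries.invOneSubPow_val_succ_eq_mk_add_choose]
      ext n
      rw [PowerSeries.coeff_mk, PowerSeries.coeff_mk]
      norm_cast
      rw [show s + 1 + n - 1 = s + n by omega, Nat.choose_symm_add]

end aux


/-- Generation bound from a degree-one hsop and a negative `a`-invariant: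
let `A` be ℕ-graded over a field `k` with `A₀ = k`, of Krull dimension `s`;
let `f₁,…,f_s ∈ A₁` be a homogeneous system of parameters, so that `A` is a free
module over `S = k[f₁,…,f_s]` with homogeneous basis `y₁,…,y_m` (`deg y_j = D j`);
and suppose the Hilbert series `H(A;t)` is a rational function of negative degree
(i.e. `H(A;t) = p/q` with `deg p < deg q`).  Then every `D j < s`; in particular
`A` is generated as a `k`-algebra in degrees `< s = dim A`. -/
theorem generation_degree_lt_krull_dim
    (k A : Type) [Field k] [CommRing A] [Algebra k A] [IsNoetherianRing A]
    (𝒜 : ℕ → Submodule k A) [GradedAlgebra 𝒜]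
    [∀ d, FiniteDimensional k (𝒜 d)]
    (h0 : 𝒜 0 = (Algebra.ofId k A).range.toSubmodule)
    (s m : ℕ) (hdim : ringKrullDim A = s)
    (f : Fin s → A) (hf : ∀ i, f i ∈ 𝒜 1)
    (hind : AlgebraicIndependent k f)
    (b : Module.Basis (Fin m) (Algebra.adjoin k (Set.range f)) A)
    (D : Fin m → ℕ) (hb : ∀ j, (b j : A) ∈ 𝒜 (D j))
    (ha : ∃ p q : Polynomial ℚ, q ≠ 0 ∧ p.degree < q.degree ∧
      (PowerSeries.mk fun d => (Module.finrank k (𝒜 d) : ℚ)) * (q : PowerSeries ℚ)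
        = (p : PowerSeries ℚ)) :
    ∀ j, D j < s := by
  classical
  intro j
  let bS : Module.Basis (Fin s →₀ ℕ) k (Algebra.adjoin k (Set.range f)) :=
    (MvPolynomial.basisMonomials (Fin s) k).map hind.aevalEquiv.toLinearEquiv
  let B : Module.Basis ((Fin s →₀ ℕ) × Fin m) k A := bS.smulTower b
  let g : (Fin s →₀ ℕ) × Fin m → ℕ := fun pr => (pr.1.sum fun _ e => e) + D pr.2
  have hBmem : ∀ pr, B pr ∈ 𝒜 (g pr) := by
    rintro ⟨α, jj⟩
    have h1 : B (α, jj) = (bS α : A) * (b jj : A) := by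
      rw [show B (α, jj) = bS α • b jj from Module.Basis.smulTower_apply bS b (α, jj),
        Algebra.smul_def]
      rfl
    have h2 : (bS α : A) = MvPolynomial.aeval (R := k) f (MvPolynomial.monomial α 1) := by
      have hh : bS α = hind.aevalEquiv (MvPolynomial.monomial α 1) := by
        simp only [bS, Module.Basis.map_apply]
        rw [show (MvPolynomial.basisMonomials (Fin s) k) α = MvPolynomial.monomial α 1
          from congrFun (MvPolynomial.coe_basisMonomials (Fin s) k) α]
        rfl
      rw [hh]
      exact hind.algebraMap_aevalEquiv _
    have h3 : (bS α : A) = ∏ i ∈ α.support, f i ^ α i := by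
      rw [h2, MvPolynomial.aeval_monomial, map_one, one_mul]
      rfl
    have h4 : (∏ i ∈ α.support, f i ^ α i) ∈ 𝒜 (α.sum fun _ e => e) := by
      have := SetLike.prod_pow_mem_graded 𝒜 (fun _ => 1) f α
        (F := α.support) (fun i _ => hf i)
      simpa [Finsupp.sum] using this
    rw [h1, h3]
    exact SetLike.mul_mem_graded h4 (hb jj)
  -- Hilbert function values
  have hrank : ∀ d, Module.finrank k (𝒜 d)
      = ∑ jj : Fin m, if D jj ≤ d then (s + (d - D jj) - 1).choose (d - D jj) else 0 := by
    intro d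
    obtain ⟨β⟩ := graded_piece_basis 𝒜 B g hBmem d
    rw [Module.finrank_eq_nat_card_basis β]
    have e : {pr // g pr = d}
        ≃ Σ jj : Fin m, {α : Fin s →₀ ℕ // (α.sum fun _ x => x) + D jj = d} :=
      ⟨fun p => ⟨p.1.2, ⟨p.1.1, p.2⟩⟩, fun q => ⟨(q.2.1, q.1), q.2.2⟩,
        fun p => rfl, fun q => rfl⟩
    rw [Nat.card_congr e, nat_card_sigma _ (inst := fun jj => fiber_finite s (D jj) d)]
    exact Finset.sum_congr rfl fun jj _ => fiber_card s (D jj) d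
  -- power series identity
  set H : PowerSeries ℚ := PowerSeries.mk fun d => (Module.finrank k (𝒜 d) : ℚ) with hHdef
  let r : Polynomial ℚ := ∑ jj : Fin m, Polynomial.X ^ D jj
  have hcoer : (r : PowerSeries ℚ) = ∑ jj : Fin m, (PowerSeries.X : PowerSeries ℚ) ^ D jj := by
    rw [← Polynomial.coeToPowerSeries.ringHom_apply, map_sum]
    exact Finset.sum_congr rfl fun jj _ => by
      rw [Polynomial.coeToPowerSeries.ringHom_apply, Polynomial.coe_pow, Polynomial.coe_X]
  have hH : H = ↑r * (PowerSeries.invOneSubPow ℚ s).val := by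
    rw [invOneSubPow_val_eq, hcoer]
    ext d
    rw [Finset.sum_mul, map_sum, PowerSeries.coeff_mk, hrank d]
    push_cast
    refine Finset.sum_congr rfl fun jj _ => ?_
    rw [PowerSeries.coeff_X_pow_mul', PowerSeries.coeff_mk]
  have key : H * (1 - PowerSeries.X : PowerSeries ℚ) ^ s = ↑r := by
    rw [hH, mul_assoc, ← PowerSeries.invOneSubPow_inv_eq_one_sub_pow,
      Units.val_inv, mul_one]
  obtain ⟨p, q, hq, hdeg, hpq⟩ := ha
  have hpoly : r * q = p * (1 - Polynomial.X) ^ s := by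
    apply Polynomial.coe_inj.mp
    rw [Polynomial.coe_mul, Polynomial.coe_mul, Polynomial.coe_pow, Polynomial.coe_sub,
      Polynomial.coe_one, Polynomial.coe_X, ← hpq, ← key]
    ring
  have hrcoeff : r.coeff (D j) ≠ 0 := by
    have : r.coeff (D j) = ∑ jj : Fin m, if D j = D jj then 1 else 0 := by
      rw [Polynomial.finset_sum_coeff]
      exact Finset.sum_congr rfl fun jj _ => Polynomial.coeff_X_pow _ _
    rw [this]
    have hpos : (0:ℚ) < ∑ jj : Fin m, if D j = D jj then 1 else 0 := by
      apply Finset.sum_pos' (fun jj _ => by split <;> norm_num)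
      exact ⟨j, Finset.mem_univ j, by simp⟩
    exact ne_of_gt hpos
  have hr0 : r ≠ 0 := fun h => hrcoeff (by simp [h])
  have hDle : D j ≤ r.natDegree := Polynomial.le_natDegree_of_ne_zero hrcoeff
  have hp0 : p ≠ 0 := by
    intro h
    rw [h, zero_mul] at hpoly
    rcases mul_eq_zero.mp hpoly with h' | h'
    · exact hr0 h'
    · exact hq h'
  have hX0 : (1 - Polynomial.X : Polynomial ℚ) ≠ 0 := by
    intro h
    have := congrArg (fun t => Polynomial.coeff t 1) h
    simp [Polynomial.coeff_one] at this
  have hXdeg : (1 - Polynomial.X : Polynomial ℚ).natDegree = 1 := by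
    have : (1 - Polynomial.X : Polynomial ℚ) = -(Polynomial.X - Polynomial.C 1) := by
      rw [Polynomial.C_1]; ring
    rw [this, Polynomial.natDegree_neg, Polynomial.natDegree_X_sub_C]
  have hmul1 : (r * q).natDegree = r.natDegree + q.natDegree :=
    Polynomial.natDegree_mul hr0 hq
  have hmul2 : (p * (1 - Polynomial.X) ^ s).natDegree = p.natDegree + s := by
    rw [Polynomial.natDegree_mul hp0 (pow_ne_zero _ hX0), Polynomial.natDegree_pow,
      hXdeg, mul_one]
  have hlt : p.natDegree < q.natDegree := Polynomial.natDegree_lt_natDegree hp0 hdeg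
  have := hpoly ▸ hmul1
  rw [hmul2] at this
  omega
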